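/- Let F be a field, ≺ a term order, F ⊆ F^n finite, h ∉ F, and let G = {g_1,...,g_s} be the reduced Gröbner basis of I(F) with lm(g_1) ≺ ... ≺ lm(g_s). Let i be the minimal index with g_i(h) ≠ 0. Then Sm(≺, F ∪ {h}) = Sm(≺, F) ∪ {lm(g_i)}. -/

import Mathlib

open MvPolynomial

/-- The set of polynomials vanishing on `S` (the vanishing ideal, as a set). -/
def vanishingOn {σ F : Type*} [CommSemiring F] (S : Set (σ → F)) :
    Set (MvPolynomial σ F) :=
  {f | ∀ x ∈ S, MvPolynomial.eval x f = 0}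

/-- `u` is the leading monomial of `f` with respect to the term order `m`. -/
def IsLeadingMonomial {σ F : Type*} [CommSemiring F] (m : MonomialOrder σ)
    (f : MvPolynomial σ F) (u : σ →₀ ℕ) : Prop :=
  u ∈ f.support ∧ ∀ v ∈ f.support, m.toSyn v ≤ m.toSyn u

/-- `u` is a standard monomial of the vanishing ideal of `S` with respect to `m`. -/
def IsStandard {σ F : Type*} [CommSemiring F] (m : MonomialOrder σ)
    (S : Set (σ → F)) (u : σ →₀ ℕ) : Prop :=
  ¬ ∃ f ∈ vanishingOn S, IsLeadingMonomial m f u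

/-- If `G = {g_1, …, g_s}` is the reduced Gröbner basis of `I(S)` with
`lm(g_1) ≺ … ≺ lm(g_s)`, `h ∉ S`, and `i` is minimal with `g_i(h) ≠ 0`, then
`Sm(≺, S ∪ {h}) = Sm(≺, S) ∪ {lm(g_i)}`. -/
theorem stmt10 {n s : ℕ} {F : Type*} [Field F]
    (m : MonomialOrder (Fin n))
    (S : Set (Fin n → F)) (hS : S.Finite) (h : Fin n → F) (hh : h ∉ S)
    (g : Fin s → MvPolynomial (Fin n) F) (lmg : Fin s → (Fin n →₀ ℕ))
    (hlm : ∀ j, IsLeadingMonomial m (g j) (lmg j))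
    (hmem : ∀ j, g j ∈ vanishingOn S)
    -- Gröbner basis property: the leading monomial of every nonzero element of `I(S)` is
    -- divisible by some `lm(g_j)`.
    (hGB : ∀ f ∈ vanishingOn S, f ≠ 0 →
      ∀ u, IsLeadingMonomial m f u → ∃ j w, u = lmg j + w)
    -- reduced: monic and no monomial of `g_j` is divisible by `lm(g_{j'})` for `j' ≠ j`.
    (hmonic : ∀ j, coeff (lmg j) (g j) = 1)
    (hred : ∀ j j' : Fin s, j ≠ j' → ∀ u ∈ (g j).support, ¬ ∃ w, u = lmg j' + w)
    (hsorted : ∀ j j' : Fin s, j < j' → m.toSyn (lmg j) < m.toSyn (lmg j'))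
    (i : Fin s) (hi : eval h (g i) ≠ 0) (hmin : ∀ j, j < i → eval h (g j) = 0) :
    ∀ u : Fin n →₀ ℕ,
      IsStandard m (S ∪ {h}) u ↔ (IsStandard m S u ∨ u = lmg i) := by
  classical
  -- closure of vanishingOn under p - t * q
  have hvsub : ∀ p q t : MvPolynomial (Fin n) F, p ∈ vanishingOn S → q ∈ vanishingOn S →
      p - t * q ∈ vanishingOn S := by
    intro p q t hp hq x hx
    simp only [map_sub, map_mul, hp x hx, hq x hx, mul_zero, sub_zero]
  -- j-index comparison helper: if toSyn (lmg j) < toSyn (lmg i) then j < i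
  have hidx : ∀ j : Fin s, m.toSyn (lmg j) < m.toSyn (lmg i) → j < i := by
    intro j hj
    by_contra hnot
    rcases lt_or_eq_of_le (not_lt.1 hnot) with hlt | heq
    · exact absurd (hsorted i j hlt) (not_lt.2 hj.le)
    · rw [heq] at hj; exact lt_irrefl _ hj
  -- key lemma: a polynomial in I(S) whose monomials are all ≺ lmg i vanishes at h
  have keyL : ∀ b : m.syn, ∀ p ∈ vanishingOn S,
      (∀ v ∈ p.support, m.toSyn v ≤ b) → b < m.toSyn (lmg i) → eval h p = 0 := by
    intro b
    induction b using WellFoundedLT.induction with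
    | _ b IH =>
      intro p hp hsupp hb
      by_cases hp0 : p = 0
      · simp [hp0]
      · obtain ⟨u, huS, humax⟩ := Finset.exists_max_image p.support m.toSyn (support_nonempty.2 hp0)
        have hub : m.toSyn u ≤ b := hsupp u huS
        obtain ⟨j, w, hjw⟩ := hGB p hp hp0 u ⟨huS, humax⟩
        have hjle : m.toSyn (lmg j) ≤ m.toSyn u := by
          rw [hjw]; exact m.toSyn_monotone le_self_add
        have hji : j < i := hidx j (lt_of_le_of_lt (hjle.trans hub) hb)
        set c := coeff u p with hc
        set p' := p - (C c * (monomial w 1)) * g j with hp'def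
        have hp' : p' ∈ vanishingOn S := hvsub p (g j) _ hp (hmem j)
        have hcplt : coeff u ((C c * monomial w 1) * g j) = c := by
          rw [mul_assoc, coeff_C_mul, hjw, add_comm (lmg j) w, coeff_monomial_mul, hmonic j]
          ring
        have hcoeffu : coeff u p' = 0 := by
          rw [hp'def, coeff_sub, hcplt, sub_self]
        have hsupp' : ∀ v ∈ p'.support, m.toSyn v < m.toSyn u := by
          intro v hv
          have hv0 : coeff v p' ≠ 0 := mem_support_iff.1 hv
          have hvne : v ≠ u := by rintro rfl; exact hv0 hcoeffu
          have hvle : m.toSyn v ≤ m.toSyn u := by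
            rw [hp'def, coeff_sub, mul_assoc, coeff_C_mul] at hv0
            by_cases hvp : coeff v p = 0
            · have : coeff v (monomial w 1 * g j) ≠ 0 := by
                intro hz; rw [hvp, hz] at hv0; simp at hv0
              rw [coeff_monomial_mul'] at this
              by_cases hwv : w ≤ v
              · rw [if_pos hwv, one_mul] at this
                have hvw : w + (v - w) = v := add_tsub_cancel_of_le hwv
                have : m.toSyn (v - w) ≤ m.toSyn (lmg j) := (hlm j).2 _ (mem_support_iff.2 this)
                calc m.toSyn v = m.toSyn w + m.toSyn (v - w) := by rw [← map_add, hvw]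
                  _ ≤ m.toSyn w + m.toSyn (lmg j) := by exact add_le_add_right this _
                  _ = m.toSyn u := by rw [← map_add, hjw, add_comm]
              · rw [if_neg hwv] at this; exact absurd rfl this
            · exact humax v (mem_support_iff.2 hvp)
          exact lt_of_le_of_ne hvle (fun hcon => hvne (m.toSyn.injective hcon))
        have hevalp' : eval h p' = 0 := by
          by_cases hp'0 : p' = 0
          · simp [hp'0]
          · obtain ⟨u', hu'S, hu'max⟩ := Finset.exists_max_image p'.support m.toSyn (support_nonempty.2 hp'0)
            have hu'b : m.toSyn u' < b := lt_of_lt_of_le (hsupp' u' hu'S) hub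
            exact IH (m.toSyn u') hu'b p' hp'
              (fun v hv => (hu'max v hv)) (lt_trans hu'b hb)
        have : eval h p = eval h p' + c * (eval h (monomial w 1)) * eval h (g j) := by
          rw [hp'def, map_sub, map_mul, map_mul, eval_C]; ring
        rw [this, hevalp', hmin j hji]; ring
  -- version with strict bound
  have evalL : ∀ p ∈ vanishingOn S, (∀ v ∈ p.support, m.toSyn v < m.toSyn (lmg i)) →
      eval h p = 0 := by
    intro p hp hsupp
    by_cases hp0 : p = 0
    · simp [hp0]
    · obtain ⟨u, huS, humax⟩ := Finset.exists_max_image p.support m.toSyn (support_nonempty.2 hp0)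
      exact keyL (m.toSyn u) p hp (fun v hv => humax v hv) (hsupp u huS)
  -- Part A: lmg i is standard for S ∪ {h}
  have partA : IsStandard m (S ∪ {h}) (lmg i) := by
    rintro ⟨f, hf, hfu, hfmax⟩
    have hfS : f ∈ vanishingOn S := fun x hx => hf x (Or.inl hx)
    set c := coeff (lmg i) f with hc
    have hc0 : c ≠ 0 := mem_support_iff.1 hfu
    set r := f - C c * g i with hrdef
    have hr : r ∈ vanishingOn S := hvsub f (g i) _ hfS (hmem i)
    have hcoeffr : coeff (lmg i) r = 0 := by
      rw [hrdef, coeff_sub, coeff_C_mul, hmonic i]; ring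
    have hsuppr : ∀ v ∈ r.support, m.toSyn v < m.toSyn (lmg i) := by
      intro v hv
      have hv0 : coeff v r ≠ 0 := mem_support_iff.1 hv
      have hvne : v ≠ lmg i := by rintro rfl; exact hv0 hcoeffr
      have hvle : m.toSyn v ≤ m.toSyn (lmg i) := by
        rw [hrdef, coeff_sub, coeff_C_mul] at hv0
        by_cases hvf : coeff v f = 0
        · have : coeff v (g i) ≠ 0 := by
            intro hz; rw [hvf, hz] at hv0; simp at hv0
          exact (hlm i).2 v (mem_support_iff.2 this)
        · exact hfmax v (mem_support_iff.2 hvf)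
      exact lt_of_le_of_ne hvle (fun hcon => hvne (m.toSyn.injective hcon))
    have hevalr : eval h r = 0 := evalL r hr hsuppr
    have hevalf : eval h f = 0 := hf h (Or.inr rfl)
    have : eval h f = eval h r + c * eval h (g i) := by
      rw [hrdef, map_sub, map_mul, eval_C]; ring
    rw [hevalf, hevalr, zero_add] at this
    exact hi (by
      rcases mul_eq_zero.1 this.symm with hcz | hgz
      · exact absurd hcz hc0
      · exact hgz)
  -- Part B: if u not standard for S and u ≠ lmg i, then u not standard for S ∪ {h}
  have partB : ∀ u : Fin n →₀ ℕ, ¬ IsStandard m S u → u ≠ lmg i →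
      ¬ IsStandard m (S ∪ {h}) u := by
    intro u hns hne
    rw [IsStandard, not_not] at hns
    obtain ⟨f, hfS, hfu, hfmax⟩ := hns
    have hf0 : f ≠ 0 := fun hz => by simp [hz] at hfu
    obtain ⟨j, w, hjw⟩ := hGB f hfS hf0 u ⟨hfu, hfmax⟩
    set p := monomial w (1 : F) * g j with hpdef
    have hpS : p ∈ vanishingOn S := by
      intro x hx
      rw [hpdef, map_mul, hmem j x hx, mul_zero]
    have hcoeffp : coeff u p = 1 := by
      rw [hpdef, hjw, add_comm (lmg j) w, coeff_monomial_mul, hmonic j, one_mul]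
    have hsuppp : ∀ v ∈ p.support, m.toSyn v ≤ m.toSyn u := by
      intro v hv
      have hv0 : coeff v p ≠ 0 := mem_support_iff.1 hv
      rw [hpdef, coeff_monomial_mul'] at hv0
      by_cases hwv : w ≤ v
      · rw [if_pos hwv, one_mul] at hv0
        have hvw : w + (v - w) = v := add_tsub_cancel_of_le hwv
        have hle : m.toSyn (v - w) ≤ m.toSyn (lmg j) := (hlm j).2 _ (mem_support_iff.2 hv0)
        calc m.toSyn v = m.toSyn w + m.toSyn (v - w) := by rw [← map_add, hvw]
          _ ≤ m.toSyn w + m.toSyn (lmg j) := add_le_add_right hle _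
          _ = m.toSyn u := by rw [← map_add, hjw, add_comm]
      · rw [if_neg hwv] at hv0; exact absurd rfl hv0
    have hplm : IsLeadingMonomial m p u :=
      ⟨mem_support_iff.2 (by rw [hcoeffp]; exact one_ne_zero), hsuppp⟩
    rw [IsStandard, not_not]
    by_cases hph : eval h p = 0
    · exact ⟨p, fun x hx => hx.elim (hpS x) (fun hxh => by rw [hxh]; exact hph), hplm⟩
    · -- g j doesn't vanish at h, so i ≤ j, so lmg i ≺ u
      have hgj : eval h (g j) ≠ 0 := by
        intro hz
        rw [hpdef, map_mul, hz, mul_zero] at hph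
        exact hph rfl
      have hij : i ≤ j := not_lt.1 (fun hlt => hgj (hmin j hlt))
      have hlmiu : m.toSyn (lmg i) < m.toSyn u := by
        rcases lt_or_eq_of_le hij with hlt | heq
        · exact lt_of_lt_of_le (hsorted i j hlt)
            (by rw [hjw]; exact m.toSyn_monotone le_self_add)
        · subst heq
          have hw0 : w ≠ 0 := by rintro rfl; exact hne (by rw [hjw, add_zero])
          have : (0 : m.syn) < m.toSyn w := by
            rcases lt_or_eq_of_le (bot_le (a := m.toSyn w)) with h1 | h1
            · exact h1
            · exact absurd (m.toSyn.injective (by rw [← h1]; simp)) hw0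
          rw [hjw, map_add]
          exact lt_add_of_pos_right _ this
      set c' := eval h p / eval h (g i) with hc'
      set q := p - C c' * g i with hqdef
      have hqS : q ∈ vanishingOn S := hvsub p (g i) _ hpS (hmem i)
      have hqh : eval h q = 0 := by
        have e1 : eval h (C c' * g i) = c' * eval h (g i) := by rw [map_mul, eval_C]
        rw [hqdef, map_sub, e1, hc', div_mul_cancel₀ _ hi, sub_self]
      have hcoeffgi : coeff u (g i) = 0 := by
        by_contra hc0
        exact absurd ((hlm i).2 u (mem_support_iff.2 hc0)) (not_le.2 hlmiu)
      have hcoeffq : coeff u q = 1 := by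
        rw [hqdef, coeff_sub, coeff_C_mul, hcoeffgi, hcoeffp]; ring
      refine ⟨q, fun x hx => hx.elim (hqS x) (fun hxh => by rw [hxh]; exact hqh),
        mem_support_iff.2 (by rw [hcoeffq]; exact one_ne_zero), ?_⟩
      intro v hv
      have hv0 : coeff v q ≠ 0 := mem_support_iff.1 hv
      rw [hqdef, coeff_sub, coeff_C_mul] at hv0
      by_cases hvp : coeff v p = 0
      · have : coeff v (g i) ≠ 0 := by
          intro hz; rw [hvp, hz] at hv0; simp at hv0
        exact le_trans ((hlm i).2 v (mem_support_iff.2 this)) hlmiu.le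
      · exact hsuppp v (mem_support_iff.2 hvp)
  -- assemble
  intro u
  constructor
  · intro hstd
    by_cases hs : IsStandard m S u
    · exact Or.inl hs
    · right
      by_contra hne
      exact (partB u hs hne) hstd
  · rintro (hs | rfl)
    · rintro ⟨f, hf, hflm⟩
      exact hs ⟨f, fun x hx => hf x (Or.inl hx), hflm⟩
    · exact partA
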